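/- Let H be a numerical semigroup minimally generated by n < a₂ < ⋯ < a_n (so the number of minimal generators equals the smallest generator n; in particular n ≥ 2). Then QF(H) = {a₂ − n, a₃ − n, …, a_n − n}, and the Frobenius number of H is f(H) = a_n − n. -/

import Mathlib

set_option synthInstance.maxHeartbeats 400000
set_option maxHeartbeats 1000000

/-- The Frobenius number of a numerical semigroup `H ⊆ ℕ`: the largest natural number
not in `H` (meaningful when `H ≠ ℕ` and the complement of `H` is finite). -/
noncomputable def frobeniusNumber (H : AddSubmonoid ℕ) : ℕ :=
  sSup {x : ℕ | x ∉ H}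

/-- The set of quasi-Frobenius numbers of a numerical semigroup `H`:
`QF(H) = {x ∈ ℕ \ H : x + h ∈ H for every nonzero h ∈ H}`. -/
def QF (H : AddSubmonoid ℕ) : Set ℕ :=
  {x | x ∉ H ∧ ∀ h ∈ H, h ≠ 0 → x + h ∈ H}

/-- Any element of the closure of `S ⊆ ℕ` lies in the closure of its small members. -/
lemma mem_closure_small {S : Set ℕ} {x : ℕ} (hx : x ∈ AddSubmonoid.closure S) :
    x ∈ AddSubmonoid.closure (S ∩ Set.Iic x) := by
  have key : ∀ y (_ : y ∈ AddSubmonoid.closure S), ∀ m, y ≤ m →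
      y ∈ AddSubmonoid.closure (S ∩ Set.Iic m) := by
    intro y hy
    induction hy using AddSubmonoid.closure_induction with
    | mem z hz => exact fun m hm => AddSubmonoid.subset_closure ⟨hz, hm⟩
    | zero => exact fun m _ => zero_mem _
    | add u v hu hv ihu ihv =>
      intro m hm
      exact add_mem (ihu m (by omega)) (ihv m (by omega))
  exact key x hx x le_rfl

theorem stmt12 (H : AddSubmonoid ℕ) (hfin : ((H : Set ℕ)ᶜ).Finite)
    (n : ℕ) (hn : 2 ≤ n) (a : Fin n → ℕ)
    (hmono : StrictMono a) (ha0 : a ⟨0, by omega⟩ = n)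
    (hgen : AddSubmonoid.closure (Set.range a) = H)
    (hmin : ∀ B : Set ℕ, B ⊂ Set.range a → AddSubmonoid.closure B ≠ H) :
    QF H = (fun i : Fin n => a i - n) '' {i : Fin n | (i : ℕ) ≠ 0}
    ∧ frobeniusNumber H = a ⟨n - 1, by omega⟩ - n := by
  have hnpos : 0 < n := by omega
  have ha0' : ∀ i : Fin n, n ≤ a i := by
    intro i
    rw [← ha0]
    exact hmono.monotone (by rw [Fin.le_def]; exact Nat.zero_le _)
  have hapos : ∀ i : Fin n, (i : ℕ) ≠ 0 → n < a i := by
    intro i hi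
    rw [← ha0]
    exact hmono (by rw [Fin.lt_def]; exact Nat.pos_of_ne_zero hi)
  have haH : ∀ i : Fin n, a i ∈ H := by
    intro i; rw [← hgen]; exact AddSubmonoid.subset_closure ⟨_, rfl⟩
  have hnH : (n : ℕ) ∈ H := ha0 ▸ haH ⟨0, by omega⟩
  -- no generator is in the closure of the others
  have not_self : ∀ j : Fin n, a j ∉ AddSubmonoid.closure (Set.range a \ {a j}) := by
    intro j hj
    apply hmin (Set.range a \ {a j})
    · constructor
      · exact Set.diff_subset
      · intro hsub
        exact (hsub ⟨j, rfl⟩).2 rfl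
    · apply le_antisymm
      · rw [← hgen]; exact AddSubmonoid.closure_mono Set.diff_subset
      · rw [← hgen, AddSubmonoid.closure_le]
        rintro x ⟨i, rfl⟩
        by_cases h : a i = a j
        · rw [h]; exact hj
        · exact AddSubmonoid.subset_closure ⟨⟨i, rfl⟩, h⟩
  have small_mem : ∀ (j : Fin n) (x : ℕ), x ∈ H → x < a j →
      x ∈ AddSubmonoid.closure (Set.range a \ {a j}) := by
    intro j x hx hlt
    rw [← hgen] at hx
    refine AddSubmonoid.closure_mono ?_ (mem_closure_small hx)
    rintro y ⟨hy, hy2⟩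
    exact ⟨hy, by simp only [Set.mem_singleton_iff, Set.mem_Iic] at hy2 ⊢; omega⟩
  have nmem : ∀ j : Fin n, (j : ℕ) ≠ 0 → n ∈ (Set.range a \ {a j}) := by
    intro j hj
    refine ⟨⟨⟨0, by omega⟩, ha0⟩, ?_⟩
    have := hapos j hj
    simp only [Set.mem_singleton_iff]; omega
  -- every nonzero element of H is ≥ n
  have ge_n : ∀ x ∈ H, x ≠ 0 → n ≤ x := by
    intro x hx
    rw [← hgen] at hx
    induction hx using AddSubmonoid.closure_induction with
    | mem z hz => intro _; obtain ⟨i, rfl⟩ := hz; exact ha0' i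
    | zero => intro h; omega
    | add u v hu hv ihu ihv =>
      intro h
      rcases Nat.eq_zero_or_pos u with h1 | h1
      · have := ihv (by omega); omega
      · have := ihu (by omega); omega
  -- crux: the generator a j is the least element of H in its congruence class (j ≠ 0)
  have crux : ∀ j : Fin n, (j : ℕ) ≠ 0 → ∀ x ∈ H, x % n = a j % n → a j ≤ x := by
    intro j hj x hx hmod
    by_contra hlt
    push_neg at hlt
    obtain ⟨k, hk⟩ := (Nat.modEq_iff_dvd' (le_of_lt hlt)).mp hmod
    rw [mul_comm] at hk
    have heq : a j = x + k * n := by omega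
    apply not_self j
    have h2 : x + k * n ∈ AddSubmonoid.closure (Set.range a \ {a j}) := by
      refine add_mem (small_mem j x hx hlt) ?_
      simpa [smul_eq_mul] using
        AddSubmonoid.nsmul_mem _ (AddSubmonoid.subset_closure (nmem j hj)) k
    rwa [← heq] at h2
  -- residues of generators are all distinct, hence surjective onto residues
  have hinj' : ∀ i j : Fin n, i < j → a i % n = a j % n → False := by
    intro i j hlt hij
    have hj0 : (j : ℕ) ≠ 0 := by
      have : (i : ℕ) < (j : ℕ) := hlt
      omega
    have := crux j hj0 (a i) (haH i) hij
    have := hmono hlt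
    omega
  have hinj : Function.Injective (fun i : Fin n => (⟨a i % n, Nat.mod_lt _ hnpos⟩ : Fin n)) := by
    intro i j hij
    simp only [Fin.mk.injEq] at hij
    rcases lt_trichotomy i j with h | h | h
    · exact (hinj' i j h hij).elim
    · exact h
    · exact (hinj' j i h hij.symm).elim
  have hsurj : ∀ x : ℕ, ∃ i : Fin n, a i % n = x % n := by
    intro x
    obtain ⟨i, hi⟩ := Finite.injective_iff_surjective.mp hinj ⟨x % n, Nat.mod_lt _ hnpos⟩
    exact ⟨i, by simpa [Fin.ext_iff] using hi⟩
  -- membership characterization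
  have char_bwd : ∀ (x : ℕ) (i : Fin n), a i ≤ x → x % n = a i % n → x ∈ H := by
    intro x i hle hmod
    obtain ⟨k, hk⟩ := (Nat.modEq_iff_dvd' hle).mp hmod.symm
    rw [mul_comm] at hk
    have : x = a i + k * n := by omega
    rw [this]
    exact add_mem (haH i) (by simpa [smul_eq_mul] using AddSubmonoid.nsmul_mem H hnH k)
  have char_fwd : ∀ x ∈ H, x ≠ 0 → ∃ i : Fin n, a i ≤ x ∧ x % n = a i % n := by
    intro x hx hx0
    obtain ⟨i, hi⟩ := hsurj x
    refine ⟨i, ?_, hi.symm⟩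
    by_cases h : (i : ℕ) = 0
    · have : i = ⟨0, by omega⟩ := Fin.ext h
      rw [this, ha0]
      exact ge_n x hx hx0
    · exact crux i h x hx hi.symm
  -- key MED property: a i + a k - n ∈ H
  have med : ∀ i k : Fin n, a i + a k - n ∈ H := by
    intro i k
    by_cases hi : (i : ℕ) = 0
    · have : i = ⟨0, by omega⟩ := Fin.ext hi
      rw [this, ha0]
      simpa using haH k
    by_cases hk : (k : ℕ) = 0
    · have : k = ⟨0, by omega⟩ := Fin.ext hk
      rw [this, ha0]
      simpa [Nat.add_sub_cancel] using haH i
    set s := a i + a k - n with hs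
    have hsn : s + n = a i + a k := by
      have := ha0' i; omega
    obtain ⟨j, hj⟩ := hsurj s
    rcases le_or_gt (a j) s with hle | hlt
    · exact char_bwd s j hle hj.symm
    · exfalso
      obtain ⟨t, ht⟩ := (Nat.modEq_iff_dvd' (le_of_lt hlt)).mp hj.symm
      rw [mul_comm] at ht
      have hai : n < a i := hapos i hi
      have hak : n < a k := hapos k hk
      rcases t with _ | t'
      · simp at ht; omega
      rw [add_mul, one_mul] at ht
      have hsi : a i < a j := by omega
      have hsk : a k < a j := by omega
      have hnj : n < a j := by omega
      have hjrep : a j = a i + a k + t' * n := by omega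
      apply not_self j
      have h2 : a i + a k + t' * n ∈ AddSubmonoid.closure (Set.range a \ {a j}) := by
        refine add_mem (add_mem ?_ ?_) ?_
        · exact AddSubmonoid.subset_closure ⟨⟨i, rfl⟩, by
            simp only [Set.mem_singleton_iff]; omega⟩
        · exact AddSubmonoid.subset_closure ⟨⟨k, rfl⟩, by
            simp only [Set.mem_singleton_iff]; omega⟩
        · have hnmem : n ∈ Set.range a \ {a j} :=
            ⟨⟨⟨0, by omega⟩, ha0⟩, by simp only [Set.mem_singleton_iff]; omega⟩
          simpa [smul_eq_mul] using
            AddSubmonoid.nsmul_mem _ (AddSubmonoid.subset_closure hnmem) t'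
      rwa [← hjrep] at h2
  -- a i - n ∉ H for i ≠ 0
  have gaps : ∀ i : Fin n, (i : ℕ) ≠ 0 → a i - n ∉ H := by
    intro i hi hmem
    have hai := hapos i hi
    have hmod : (a i - n) % n = a i % n := by
      conv_rhs => rw [show a i = (a i - n) + n by omega]
      rw [Nat.add_mod_right]
    have := crux i hi _ hmem hmod
    omega
  -- QF ⊇
  have qf_sup : ∀ i : Fin n, (i : ℕ) ≠ 0 → a i - n ∈ QF H := by
    intro i hi
    refine ⟨gaps i hi, ?_⟩
    intro h hh hh0
    obtain ⟨k, hk1, hk2⟩ := char_fwd h hh hh0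
    obtain ⟨m, hm⟩ := (Nat.modEq_iff_dvd' hk1).mp hk2.symm
    rw [mul_comm] at hm
    have hai := hapos i hi
    have hak := ha0' k
    have : a i - n + h = (a i + a k - n) + m * n := by omega
    rw [this]
    exact add_mem (med i k) (by simpa [smul_eq_mul] using AddSubmonoid.nsmul_mem H hnH m)
  -- QF ⊆
  have qf_sub : ∀ x ∈ QF H, ∃ i : Fin n, (i : ℕ) ≠ 0 ∧ a i - n = x := by
    rintro x ⟨hx, hqf⟩
    have hxn : x + n ∈ H := hqf n hnH (by omega)
    obtain ⟨i, hi1, hi2⟩ := char_fwd (x + n) hxn (by omega)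
    rw [Nat.add_mod_right] at hi2
    have hlt : x < a i := by
      by_contra hge
      push_neg at hge
      exact hx (char_bwd x i hge hi2)
    have hdvd := (Nat.modEq_iff_dvd' (le_of_lt hlt)).mp hi2
    have h1 : n ≤ a i - x := Nat.le_of_dvd (by omega) hdvd
    have hxi : x = a i - n := by omega
    have hi0 : (i : ℕ) ≠ 0 := by
      intro h0
      have : i = ⟨0, by omega⟩ := Fin.ext h0
      rw [this, ha0] at hxi
      exact hx (by rw [hxi]; simpa using zero_mem H)
    exact ⟨i, hi0, hxi.symm⟩
  constructor
  · ext x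
    constructor
    · intro hx
      obtain ⟨i, hi0, hix⟩ := qf_sub x hx
      exact ⟨i, hi0, hix⟩
    · rintro ⟨i, hi0, rfl⟩
      exact qf_sup i hi0
  · -- Frobenius number
    have hL0 : ((⟨n - 1, by omega⟩ : Fin n) : ℕ) ≠ 0 := by
      show n - 1 ≠ 0; omega
    have hmax : ∀ j : Fin n, a j ≤ a ⟨n - 1, by omega⟩ := by
      intro j
      refine hmono.monotone ?_
      rw [Fin.le_def]
      show (j : ℕ) ≤ n - 1
      have := j.isLt
      omega
    apply IsGreatest.csSup_eq
    constructor
    · exact gaps _ hL0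
    · intro y hy
      simp only [Set.mem_setOf_eq] at hy
      by_contra hgt
      push_neg at hgt
      obtain ⟨j, hj⟩ := hsurj y
      have hlt : y < a j := by
        by_contra hge
        push_neg at hge
        exact hy (char_bwd y j hge hj.symm)
      have h1 : n ≤ a j - y :=
        Nat.le_of_dvd (by omega) ((Nat.modEq_iff_dvd' (le_of_lt hlt)).mp hj.symm)
      have := hmax j
      have := ha0' j
      omega
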